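/- With the same hypotheses, the function y₋(x) = Q(x)^{-1/4} · exp(-S₀(x)/ε) satisfies the same identity: ε²y₋'' - Q y₋ = ε² Q₂ y₋, with the same Q₂ = 5(Q'/(4Q))² - Q''/(4Q). In particular the relative residual is independent of the sign choice in the exponent. -/

import Mathlib

/-- **Backward WKB theorem, minus branch.**
If `Q` is C² (with derivative `Q'` and second derivative `Q''`) and positive on an open
set `I`, `S₀` satisfies `S₀' = √Q` on `I`, and `y = Q^{-1/4} exp(-S₀/ε)` with `ε ≠ 0`,
then `ε² y'' - Q y = ε² Q₂ y` on `I`, where `Q₂ = 5 (Q'/(4Q))² - Q''/(4Q)`. -/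
theorem wkb_backward_minus
    (ε : ℝ) (hε : ε ≠ 0) (I : Set ℝ) (hI : IsOpen I)
    (Q Q' Q'' S₀ y Q₂ : ℝ → ℝ)
    (hQpos : ∀ x ∈ I, 0 < Q x)
    (hQ : ∀ x ∈ I, HasDerivAt Q (Q' x) x)
    (hQ' : ∀ x ∈ I, HasDerivAt Q' (Q'' x) x)
    (hQ''cont : ContinuousOn Q'' I)
    (hS₀ : ∀ x ∈ I, HasDerivAt S₀ (Real.sqrt (Q x)) x)
    (hy : ∀ x, y x = (Q x) ^ (-(1 : ℝ)/4) * Real.exp (-S₀ x / ε))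
    (hQ₂ : ∀ x ∈ I, Q₂ x = 5 * (Q' x)^2 / (16 * (Q x)^2) - Q'' x / (4 * Q x)) :
    ∀ x ∈ I, ε^2 * deriv (deriv y) x - Q x * y x = ε^2 * Q₂ x * y x := by
  have hyf : y = fun x => (Q x) ^ (-(1 : ℝ)/4) * Real.exp (-S₀ x / ε) := funext hy
  -- first derivative
  set g : ℝ → ℝ := fun t => -(Q' t / (4 * Q t)) - Real.sqrt (Q t) / ε with hg
  have hy1 : ∀ x ∈ I, HasDerivAt y (g x * y x) x := by
    intro x hx
    have hQx := hQpos x hx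
    have h1 : HasDerivAt (fun t => (Q t) ^ (-(1 : ℝ)/4))
        (Q' x * (-(1:ℝ)/4) * (Q x) ^ ((-(1:ℝ)/4) - 1)) x :=
      (hQ x hx).rpow_const (Or.inl (ne_of_gt hQx))
    have h2 : HasDerivAt (fun t => Real.exp (-S₀ t / ε))
        (Real.exp (-S₀ x / ε) * (-Real.sqrt (Q x) / ε)) x :=
      (((hS₀ x hx).neg).div_const ε).exp
    have h := (h1.mul h2)
    rw [hyf]
    refine h.congr_deriv ?_
    have hpow : (Q x) ^ ((-(1:ℝ)/4) - 1) = (Q x) ^ (-(1:ℝ)/4) / Q x := by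
      rw [Real.rpow_sub hQx, Real.rpow_one]
    rw [hpow, hg]
    simp only [hy]
    field_simp
    ring
  -- second derivative
  intro x hx
  have hQx := hQpos x hx
  have hsx : Real.sqrt (Q x) ≠ 0 := by positivity
  have hderiv_eq : deriv y =ᶠ[nhds x] fun t => g t * y t := by
    filter_upwards [hI.mem_nhds hx] with t ht using (hy1 t ht).deriv
  have h1 : HasDerivAt (fun t => Q' t / (4 * Q t))
      ((Q'' x * (4 * Q x) - Q' x * (4 * Q' x)) / (4 * Q x)^2) x :=
    (hQ' x hx).div ((hQ x hx).const_mul 4) (by positivity)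
  have h2 : HasDerivAt (fun t => Real.sqrt (Q t)) (Q' x / (2 * Real.sqrt (Q x))) x :=
    (hQ x hx).sqrt (ne_of_gt hQx)
  have hgd : HasDerivAt g
      (-((Q'' x * (4 * Q x) - Q' x * (4 * Q' x)) / (4 * Q x)^2)
        - (Q' x / (2 * Real.sqrt (Q x))) / ε) x := h1.neg.sub (h2.div_const ε)
  have hgy : HasDerivAt (fun t => g t * y t)
      ((-((Q'' x * (4 * Q x) - Q' x * (4 * Q' x)) / (4 * Q x)^2)
        - (Q' x / (2 * Real.sqrt (Q x))) / ε) * y x + g x * (g x * y x)) x :=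
    hgd.mul (hy1 x hx)
  have h2nd : deriv (deriv y) x =
      (-((Q'' x * (4 * Q x) - Q' x * (4 * Q' x)) / (4 * Q x)^2)
        - (Q' x / (2 * Real.sqrt (Q x))) / ε) * y x + g x * (g x * y x) := by
    rw [Filter.EventuallyEq.deriv_eq hderiv_eq]
    exact hgy.deriv
  rw [h2nd, hQ₂ x hx, hg]
  set s := Real.sqrt (Q x) with hsdef
  have hQeq : Q x = s ^ 2 := (Real.sq_sqrt hQx.le).symm
  rw [hQeq]
  field_simp
  simp only [hQeq, Real.sqrt_sq (show (0:ℝ) ≤ s from Real.sqrt_nonneg (Q x))]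
  ring
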